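/- Let P' be the result of eliminating a feasible AND-tree t for false from P, let p^I(x) label an initial node of t, and let θ = constr(t) projected onto x. Then presafe(P) is equivalent to presafe(P') ∧ ¬θ as a safe precondition: conjoining ¬θ with presafe(P') yields a safe precondition for P. -/

import Mathlib

/- Abstract framework for constrained Horn clauses (CHCs).
   Constraints are modelled semantically: a clause constraint relates the
   value of the head argument to the list of values of the body atoms'
   arguments.  An AND-tree is a tree of clauses (`Skel`); it is feasible iff
   it admits a decoration by domain values satisfying all constraints. -/

namespace CHC

structure Clause (Pred D : Type) where
  head : Pred
  body : List Pred
  constr : D → List D → Prop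

abbrev Program (Pred D : Type) := Set (Clause Pred D)

/-- AND-trees (node labels: clauses; children correspond to body atoms). -/
inductive Skel (Pred D : Type) : Type where
  | node : Clause Pred D → List (Skel Pred D) → Skel Pred D

def Skel.root {Pred D : Type} : Skel Pred D → Pred
  | .node c _ => c.head

/-- An AND-tree for the program `P`: every node is labelled by a clause of
`P` and the children's roots are the body atoms of the clause. -/
inductive Wf {Pred D : Type} (P : Program Pred D) : Skel Pred D → Prop where
  | node {c : Clause Pred D} {ts : List (Skel Pred D)} :
      c ∈ P → c.body = ts.map Skel.root → (∀ t ∈ ts, Wf P t) →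
      Wf P (Skel.node c ts)

/-- `Deco s d` : the AND-tree `s` admits a satisfying assignment of values to
its nodes in which the root gets value `d` (so `s` is feasible). -/
inductive Deco {Pred D : Type} : Skel Pred D → D → Prop where
  | node {c : Clause Pred D} {ts : List (Skel Pred D)} {d : D} {args : List D} :
      c.constr d args → args.length = ts.length →
      (∀ p ∈ ts.zip args, Deco p.1 p.2) →
      Deco (Skel.node c ts) d

/-- `P ⊢_T p` : there is a feasible AND-tree for `P` with root labelled `p`. -/
def Derives {Pred D : Type} (P : Program Pred D) (p : Pred) : Prop :=
  ∃ (s : Skel Pred D) (d : D), Wf P s ∧ s.root = p ∧ Deco s d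

/-- Initial clauses: constrained facts for (a renamed version of) the initial
predicate; `inits` is the set of (renamed versions of) the initial predicate. -/
def IsInitial {Pred D : Type} (inits : Set Pred) (c : Clause Pred D) : Prop :=
  c.head ∈ inits ∧ c.body = []

/-- The AND-tree contains an initial node. -/
inductive HasInit {Pred D : Type} (inits : Set Pred) : Skel Pred D → Prop where
  | here {c : Clause Pred D} {ts} : IsInitial inits c → HasInit inits (Skel.node c ts)
  | there {c : Clause Pred D} {ts} {t} : t ∈ ts → HasInit inits t →
      HasInit inits (Skel.node c ts)

/-- presafe(P) = ¬ ⋁ { θ | (p^I(x) ← θ) ∈ P }. -/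
def presafe {Pred D : Type} (P : Program Pred D) (inits : Set Pred) (d : D) : Prop :=
  ¬ ∃ c ∈ P, IsInitial inits c ∧ c.constr d []

/-- The program obtained from `P` by replacing each initial clause
`p^I(x) ← θ` by `p^I(x) ← θ ∧ φ`. -/
def conjoinInit {Pred D : Type} (P : Program Pred D) (inits : Set Pred) (φ : D → Prop) :
    Program Pred D :=
  { c' | ∃ c ∈ P, (¬ IsInitial inits c ∧ c' = c) ∨
      (IsInitial inits c ∧
        c' = { c with constr := fun d args => c.constr d args ∧ φ d }) }

/-- `φ` is a safe precondition for `P` (with distinguished `false` predicate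
`ff`): conjoining `φ` to every initial clause blocks all feasible AND-trees
for `false`. -/
def SafePrecond {Pred D : Type} (P : Program Pred D) (inits : Set Pred) (ff : Pred)
    (φ : D → Prop) : Prop :=
  ¬ Derives (conjoinInit P inits φ) ff

/-- Specialisation transformation `P ⟹_A P'` (Definition 3): derivations of
the goal atom are preserved, and every initial clause of `P` has a counterpart
in `P'` with stronger constraint. -/
def IsSpec {Pred D : Type} (P P' : Program Pred D) (inits inits' : Set Pred)
    (goal : Pred) : Prop :=
  (Derives P goal ↔ Derives P' goal) ∧
  ∀ c ∈ P, IsInitial inits c →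
    ∃ c' ∈ P', IsInitial inits' c' ∧ ∀ d : D, c'.constr d [] → c.constr d []

end CHC

namespace CHC

/-- Renaming of predicates in a clause (constraints are unchanged). -/
def Clause.rename {Pred D : Type} (ρ : Pred → Pred) (c : Clause Pred D) :
    Clause Pred D :=
  ⟨ρ c.head, c.body.map ρ, c.constr⟩

/-- Renaming of predicates in an AND-tree. -/
def Skel.rename {Pred D : Type} (ρ : Pred → Pred) : Skel Pred D → Skel Pred D
  | .node c ts => .node (c.rename ρ) (ts.attach.map (fun t => Skel.rename ρ t.1))
  decreasing_by
    have := List.sizeOf_lt_of_mem t.2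
    simp only [Skel.node.sizeOf_spec]
    omega

end CHC

namespace CHC

/-- AND-trees decorated with values at each node (an assignment). -/
inductive DTree (Pred D : Type) : Type where
  | node : Clause Pred D → D → List (DTree Pred D) → DTree Pred D

def DTree.val {Pred D : Type} : DTree Pred D → D
  | .node _ d _ => d

/-- The underlying (undecorated) AND-tree of a decorated tree. -/
def DTree.skel {Pred D : Type} : DTree Pred D → Skel Pred D
  | .node c _ ts => .node c (ts.attach.map (fun t => DTree.skel t.1))
  decreasing_by
    have := List.sizeOf_lt_of_mem t.2
    simp only [DTree.node.sizeOf_spec]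
    omega

/-- The decoration satisfies all constraints of the tree. -/
inductive DFeas {Pred D : Type} : DTree Pred D → Prop where
  | node {c : Clause Pred D} {d : D} {ts : List (DTree Pred D)} :
      c.constr d (ts.map DTree.val) → (∀ t ∈ ts, DFeas t) →
      DFeas (DTree.node c d ts)

/-- The value assigned at a given position (path of child indices). -/
inductive ValAt {Pred D : Type} : DTree Pred D → List ℕ → D → Prop where
  | here {c : Clause Pred D} {d : D} {ts} : ValAt (DTree.node c d ts) [] d
  | child {c : Clause Pred D} {d : D} {ts} {i : ℕ} {t : DTree Pred D}
      {π : List ℕ} {v : D} :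
      ts[i]? = some t → ValAt t π v → ValAt (DTree.node c d ts) (i :: π) v

/-- The clause labelling the node at a given position of an AND-tree. -/
inductive ClauseAt {Pred D : Type} : Skel Pred D → List ℕ → Clause Pred D → Prop where
  | here {c : Clause Pred D} {ts} : ClauseAt (Skel.node c ts) [] c
  | child {c₀ c : Clause Pred D} {ts} {i : ℕ} {t : Skel Pred D} {π : List ℕ} :
      ts[i]? = some t → ClauseAt t π c → ClauseAt (Skel.node c₀ ts) (i :: π) c

/-- `s` is feasible: it admits a satisfying decoration. -/
def Feasible {Pred D : Type} (s : Skel Pred D) : Prop :=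
  ∃ dt : DTree Pred D, dt.skel = s ∧ DFeas dt

end CHC


namespace CHC

variable {Pred D : Type}

theorem DTree.skel_node (c : Clause Pred D) (d : D) (ts : List (DTree Pred D)) :
    (DTree.node c d ts).skel = Skel.node c (ts.map DTree.skel) := by
  rw [DTree.skel]; simp

theorem Skel.rename_node (ρ : Pred → Pred) (c : Clause Pred D) (ts : List (Skel Pred D)) :
    Skel.rename ρ (Skel.node c ts) = Skel.node (c.rename ρ) (ts.map (Skel.rename ρ)) := by
  rw [Skel.rename]; simp

theorem list_choice {α β : Type} {Φ : α → β → Prop} :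
    ∀ (l : List α), (∀ a ∈ l, ∃ b, Φ a b) → ∃ l', List.Forall₂ Φ l l'
  | [], _ => ⟨[], .nil⟩
  | a :: l, h => by
      obtain ⟨b, hb⟩ := h a (by simp)
      obtain ⟨l', hl'⟩ := list_choice l (fun x hx => h x (by simp [hx]))
      exact ⟨b :: l', .cons hb hl'⟩

theorem forall₂_right {α β : Type} {R : α → β → Prop} :
    ∀ {l₁ : List α} {l₂ : List β}, List.Forall₂ R l₁ l₂ → ∀ b ∈ l₂, ∃ a ∈ l₁, R a b := by
  intro l₁ l₂ h
  induction h with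
  | nil => simp
  | cons hab _ ih =>
      intro b hb
      rcases List.mem_cons.mp hb with rfl | hb
      · exact ⟨_, by simp, hab⟩
      · obtain ⟨a, ha, hr⟩ := ih b hb
        exact ⟨a, by simp [ha], hr⟩

theorem exists_valAt : ∀ (π : List ℕ) (dt : DTree Pred D) (c : Clause Pred D),
    ClauseAt dt.skel π c → ∃ v, ValAt dt π v
  | [], .node _ d _, _, _ => ⟨d, .here⟩
  | i :: π', .node c' d ts, c, h => by
      rw [DTree.skel_node] at h
      cases h with
      | child hget hc =>
        rw [List.getElem?_map] at hget
        obtain ⟨dt', hdt', hskel⟩ := Option.map_eq_some_iff.mp hget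
        obtain ⟨v, hv⟩ := exists_valAt π' dt' c (by rw [hskel]; exact hc)
        exact ⟨v, .child hdt' hv⟩

theorem wf_clauseAt {P : Program Pred D} {s : Skel Pred D} {π : List ℕ} {c : Clause Pred D}
    (hwf : Wf P s) (hc : ClauseAt s π c) : c ∈ P := by
  induction hc with
  | here => cases hwf; assumption
  | child hget _ ih =>
      cases hwf with
      | node hmem hbody hts =>
        exact ih (hts _ (List.mem_of_getElem? hget))

theorem constr_at_init {P : Program Pred D} :
    ∀ (π : List ℕ) (dt : DTree Pred D) (c : Clause Pred D) (v : D),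
    DFeas dt → Wf P dt.skel → ClauseAt dt.skel π c → ValAt dt π v → c.body = [] →
    c.constr v []
  | [], .node c' d ts, c, v, hf, hwf, hc, hv, hbody => by
      rw [DTree.skel_node] at hc hwf
      cases hc; cases hv
      cases hf with
      | node hcon _ =>
        cases hwf with
        | node _ hb _ =>
          have hts : ts = [] := by
            rw [hbody] at hb
            simpa using hb.symm
          subst hts
          simpa using hcon
  | i :: π', .node c' d ts, c, v, hf, hwf, hc, hv, hbody => by
      rw [DTree.skel_node] at hc hwf
      cases hv with
      | child hget hv' =>
        cases hc with
        | child hget2 hc' =>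
          rw [List.getElem?_map, hget, Option.map_some] at hget2
          cases hget2
          rename_i dti
          have hmem : dti ∈ ts := List.mem_of_getElem? hget
          have hfi : DFeas dti := by cases hf with | node _ h => exact h _ hmem
          have hwfi : Wf P dti.skel := by
            cases hwf with
            | node _ _ h => exact h _ (List.mem_map_of_mem (f := DTree.skel) hmem)
          exact constr_at_init π' dti c v hfi hwfi hc' hv' hbody

theorem clauseAt_rename {ρ : Pred → Pred} :
    ∀ (π : List ℕ) (s : Skel Pred D) (c : Clause Pred D),
    ClauseAt (Skel.rename ρ s) π c → ∃ c', ClauseAt s π c' ∧ c = Clause.rename ρ c'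
  | [], .node c₁ ts, c, h => by
      rw [Skel.rename_node] at h
      cases h
      exact ⟨c₁, .here, rfl⟩
  | i :: π', .node c₁ ts, c, h => by
      rw [Skel.rename_node] at h
      cases h with
      | child hget hc =>
        rw [List.getElem?_map] at hget
        obtain ⟨s', hs', heq⟩ := Option.map_eq_some_iff.mp hget
        obtain ⟨c', hc', hceq⟩ := clauseAt_rename π' s' c (by rw [heq]; exact hc)
        exact ⟨c', .child hs' hc', hceq⟩

theorem hasInit_pos {inits : Set Pred} {s : Skel Pred D} (h : HasInit inits s) :
    ∃ π c, ClauseAt s π c ∧ IsInitial inits c := by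
  induction h with
  | here hc => exact ⟨[], _, .here, hc⟩
  | there hmem _ ih =>
      obtain ⟨π, c, hat, hi⟩ := ih
      obtain ⟨i, hlt, hget⟩ := List.mem_iff_getElem.mp hmem
      exact ⟨i :: π, c, .child (by rw [List.getElem?_eq_getElem hlt, hget]) hat, hi⟩

theorem strip {P : Program Pred D} {inits : Set Pred} {φ : D → Prop} :
    ∀ {s : Skel Pred D} {d : D}, Deco s d → Wf (conjoinInit P inits φ) s →
    ∃ dt : DTree Pred D, DFeas dt ∧ dt.val = d ∧ dt.skel.root = s.root ∧
      Wf P dt.skel ∧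
      ∀ π c v, ClauseAt dt.skel π c → ValAt dt π v → IsInitial inits c → φ v := by
  intro s d hdeco
  induction hdeco with
  | @node c' ts d args hcon hlen hch ih =>
    intro hwf
    cases hwf with
    | node hmem hbody hwfs =>
    obtain ⟨c, hcP, hcase⟩ := hmem
    have hkey : c'.head = c.head ∧ c'.body = c.body ∧
        (∀ dd aa, c'.constr dd aa → c.constr dd aa) ∧
        (IsInitial inits c → ∀ dd aa, c'.constr dd aa → φ dd) := by
      rcases hcase with ⟨hni, rfl⟩ | ⟨hi, rfl⟩
      · exact ⟨rfl, rfl, fun _ _ h => h, fun h => absurd h hni⟩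
      · exact ⟨rfl, rfl, fun _ _ h => h.1, fun _ _ _ h => h.2⟩
    obtain ⟨hhead, hbody', hconimp, hφ⟩ := hkey
    have hch' : ∀ p ∈ ts.zip args, ∃ dt : DTree Pred D, DFeas dt ∧ dt.val = p.2 ∧
        dt.skel.root = p.1.root ∧ Wf P dt.skel ∧
        ∀ π c v, ClauseAt dt.skel π c → ValAt dt π v → IsInitial inits c → φ v :=
      fun p hp => ih p hp (hwfs p.1 (List.of_mem_zip hp).1)
    obtain ⟨dts, hdts⟩ := list_choice _ hch'
    have hlen2 : (ts.zip args).length = ts.length := by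
      rw [List.length_zip, hlen, min_self]
    have hlen3 : dts.length = ts.length := by rw [← hdts.length_eq, hlen2]
    have hvals : dts.map DTree.val = args := by
      apply List.ext_getElem (by rw [List.length_map, hlen3, hlen])
      intro i h1 h2
      have hg := hdts.get (i := i) (by simp only [List.length_map] at h1; omega)
        (by simp only [List.length_map] at h1; omega)
      simp only [List.get_eq_getElem, List.getElem_zip] at hg
      rw [List.getElem_map]
      exact hg.2.1
    have hroots : (dts.map DTree.skel).map Skel.root = ts.map Skel.root := by
      apply List.ext_getElem (by simp [hlen3])
      intro i h1 h2
      have hg := hdts.get (i := i) (by simp only [List.length_map] at h1; omega)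
        (by simp only [List.length_map] at h1; omega)
      simp only [List.get_eq_getElem, List.getElem_zip] at hg
      simp only [List.getElem_map]
      exact hg.2.2.1
    have hmemdts : ∀ b ∈ dts, DFeas b ∧ Wf P b.skel ∧
        ∀ π c v, ClauseAt b.skel π c → ValAt b π v → IsInitial inits c → φ v := by
      intro b hb
      obtain ⟨a, _, hΦ⟩ := forall₂_right hdts b hb
      exact ⟨hΦ.1, hΦ.2.2.2.1, hΦ.2.2.2.2⟩
    refine ⟨DTree.node c d dts, ?_, rfl, ?_, ?_, ?_⟩
    · exact .node (by rw [hvals]; exact hconimp _ _ hcon) (fun b hb => (hmemdts b hb).1)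
    · rw [DTree.skel_node]
      exact hhead.symm
    · rw [DTree.skel_node]
      refine .node hcP ?_ ?_
      · rw [← hbody', hbody, hroots]
      · intro sk hsk
        obtain ⟨b, hb, rfl⟩ := List.mem_map.mp hsk
        exact (hmemdts b hb).2.1
    · intro π cc v hca hva hini
      rw [DTree.skel_node] at hca
      cases hca with
      | here =>
          cases hva
          exact hφ hini d args hcon
      | child hget hc' =>
          cases hva with
          | child hget2 hv' =>
            rw [List.getElem?_map, hget2, Option.map_some] at hget
            cases hget
            have hb : _ ∈ dts := List.mem_of_getElem? hget2
            exact (hmemdts _ hb).2.2 _ cc v hc' hv' hini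

end CHC

open CHC in
/-- Lemma 4: let `P'` be the result of eliminating a *feasible*
AND-tree `t` for `false` from `P`, let `p^I(x)` label an initial node of `t`
(at position `π`), and let `θ` be `constr(t)` projected onto that node's
variables (the set of values the initial node can take in satisfying
assignments of `t`).  Then conjoining `¬θ` with `presafe(P')` yields a safe
precondition for `P`. -/
theorem trace_elim_feasible_safe_precond {Pred D : Type} (P P' : Program Pred D)
    (inits : Set Pred) (ff : Pred) (t : Skel Pred D) (π : List ℕ)
    (c₀ : Clause Pred D) (ρ : Pred → Pred) (θ : D → Prop)
    -- every AND-tree for `false` in `P` contains an initial node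
    (hinit : ∀ s : Skel Pred D, Wf P s → s.root = ff → HasInit inits s)
    -- `t` is a feasible AND-tree for `false` in `P`
    (hwf : Wf P t) (hroot : t.root = ff) (hfeas : Feasible t)
    -- `π` is the position of an initial node of `t`, labelled by clause `c₀`
    (hat : ClauseAt t π c₀) (hc₀ : IsInitial inits c₀)
    -- `θ = constr(t)` projected onto the initial node's variables
    (hθ : ∀ d : D, θ d ↔ ∃ dt : DTree Pred D, dt.skel = t ∧ DFeas dt ∧ ValAt dt π d)
    -- the renaming identifies `false` and the initial predicates
    (hff : ∀ p : Pred, ρ p = ff ↔ p = ff)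
    -- all clauses of `P'` are predicate-renamed copies of clauses of `P`
    (hcopy : ∀ c' ∈ P', Clause.rename ρ c' ∈ P)
    -- AND-trees of `P'` are exactly those of `P` except `t` (modulo renaming)
    (hpres : ∀ s : Skel Pred D, Wf P s → s ≠ t →
      ∃ s' : Skel Pred D, Wf P' s' ∧ Skel.rename ρ s' = s)
    (hback : ∀ s' : Skel Pred D, Wf P' s' →
      Skel.rename ρ s' ≠ t ∧ Wf P (Skel.rename ρ s')) :
    SafePrecond P inits ff (fun d => presafe P' (ρ ⁻¹' inits) d ∧ ¬ θ d) := by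
  rintro ⟨s, d, hwfQ, hrootQ, hdeco⟩
  obtain ⟨dt, hdf, hdval, hdroot, hdwf, hinv⟩ := strip hdeco hwfQ
  by_cases heq : dt.skel = t
  · have hat' : ClauseAt dt.skel π c₀ := by rw [heq]; exact hat
    obtain ⟨v, hv⟩ := exists_valAt π dt c₀ hat'
    have hφ := hinv π c₀ v hat' hv hc₀
    exact hφ.2 ((hθ v).mpr ⟨dt, heq, hdf, hv⟩)
  · obtain ⟨s', hwf', hren⟩ := hpres dt.skel hdwf heq
    have hhi := hinit dt.skel hdwf (hdroot.trans hrootQ)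
    obtain ⟨π₁, c₁, hat₁, hi₁⟩ := hasInit_pos hhi
    obtain ⟨v₁, hv₁⟩ := exists_valAt π₁ dt c₁ hat₁
    have hφ₁ := hinv π₁ c₁ v₁ hat₁ hv₁ hi₁
    obtain ⟨c₁', hc₁', hceq⟩ := clauseAt_rename π₁ s' c₁ (by rw [hren]; exact hat₁)
    have hc₁P' : c₁' ∈ P' := wf_clauseAt hwf' hc₁'
    have hconstr : c₁.constr v₁ [] := constr_at_init π₁ dt c₁ v₁ hdf hdwf hat₁ hv₁ hi₁.2
    refine hφ₁.1 ⟨c₁', hc₁P', ⟨?_, ?_⟩, ?_⟩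
    · have : c₁.head = ρ c₁'.head := by rw [hceq]; rfl
      show ρ c₁'.head ∈ inits
      rw [← this]; exact hi₁.1
    · have : c₁.body = c₁'.body.map ρ := by rw [hceq]; rfl
      have h2 : c₁'.body.map ρ = [] := by rw [← this]; exact hi₁.2
      exact List.map_eq_nil_iff.mp h2
    · rw [hceq] at hconstr
      exact hconstr
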